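/- The Fixed^{0,−1} mechanism is (⌊k/2⌋/k)-approximate for the Egalitarian objective in k-facility games with preferences in {−1,0}^k: let y* ∈ [0,ℓ]^k place facilities 1, …, ⌈k/2⌉ at 0 and facilities ⌈k/2⌉+1, …, k at ℓ. For every profile of n ≥ 1 agents with locations x_i ∈ [0, ℓ] and preferences t_i ∈ {−1,0}^k, every agent satisfies u(x_i, t_i, y*) ≥ ⌊k/2⌋·ℓ, and min_i u(x_i, t_i, y*) ≥ (⌊k/2⌋/k) · sup_{y∈[0,ℓ]^k} min_i u(x_i, t_i, y). -/

import Mathlib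

/-- Total utility of an agent at `x ∈ [0,ℓ]` with preference vector `t` for `k`
facilities placed at `y`: facility `j` contributes the distance if `t j = -1`,
the constant `ℓ` if `t j = 0`, and `ℓ` minus the distance if `t j = 1`. -/
noncomputable def uk (ℓ : ℝ) {k : ℕ} (x : ℝ) (t : Fin k → ℤ) (y : Fin k → ℝ) : ℝ :=
  ∑ j, (if t j = -1 then |x - y j| else if t j = 0 then ℓ else ℓ - |x - y j|)

/-- Admissible placements of the `k` facilities: `[0,ℓ]^k`. -/
def boxk (ℓ : ℝ) (k : ℕ) : Set (Fin k → ℝ) := {y | ∀ j, 0 ≤ y j ∧ y j ≤ ℓ}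

lemma aux_sum_ite (k m c : ℕ) (x ℓ : ℝ) (hm : m ≤ c) (hc : c ≤ k) (hmc : m + c = k) :
    ∑ j : Fin k, ((if (j : ℕ) < m then x else 0) + (if c ≤ (j : ℕ) then ℓ - x else 0))
      = (m : ℝ) * ℓ := by
  rw [Finset.sum_add_distrib,
    Fin.sum_univ_eq_sum_range (fun j => if j < m then x else 0) k,
    Fin.sum_univ_eq_sum_range (fun j => if c ≤ j then ℓ - x else 0) k]
  have h1 : ∑ j ∈ Finset.range k, (if j < m then x else 0)
      = ∑ j ∈ (Finset.range k).filter (fun j => j < m), x := by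
    rw [Finset.sum_filter]
  have e1 : (Finset.range k).filter (fun j => j < m) = Finset.range m := by
    ext j; simp [Finset.mem_filter]; omega
  have h2 : ∑ j ∈ Finset.range k, (if c ≤ j then ℓ - x else 0)
      = ∑ j ∈ (Finset.range k).filter (fun j => c ≤ j), (ℓ - x) := by
    rw [Finset.sum_filter]
  have e2 : (Finset.range k).filter (fun j => c ≤ j) = Finset.Ico c k := by
    ext j; simp [Finset.mem_filter, Finset.mem_Ico]; omega
  rw [h1, e1, h2, e2, Finset.sum_const, Finset.sum_const, Finset.card_range, Nat.card_Ico]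
  have : k - c = m := by omega
  rw [this]
  push_cast [nsmul_eq_mul]
  ring

/-- the `Fixed^{0,-1}` mechanism, placing the first `⌈k/2⌉`
facilities at `0` and the remaining `⌊k/2⌋` at `ℓ`, gives every agent with
preferences in `{-1,0}^k` utility at least `⌊k/2⌋·ℓ` and is
`⌊k/2⌋/k`-approximate for the Egalitarian objective. -/
theorem fixed0m1_egalitarian_approx
    (ℓ : ℝ) (hℓ : 0 < ℓ) (k n : ℕ) (hk : 0 < k) (hn : 0 < n)
    (x : Fin n → ℝ) (t : Fin n → Fin k → ℤ)
    (hx : ∀ i, x i ∈ Set.Icc 0 ℓ)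
    (ht : ∀ i j, t i j = -1 ∨ t i j = 0) :
    (∀ i, ((k / 2 : ℕ) : ℝ) * ℓ ≤
        uk ℓ (x i) (t i) (fun j => if (j : ℕ) < (k + 1) / 2 then 0 else ℓ)) ∧
    (((k / 2 : ℕ) : ℝ) / (k : ℝ)) * (⨆ y ∈ boxk ℓ k, ⨅ i, uk ℓ (x i) (t i) y) ≤
      ⨅ i, uk ℓ (x i) (t i) (fun j => if (j : ℕ) < (k + 1) / 2 then 0 else ℓ) := by
  have hnE : Nonempty (Fin n) := ⟨⟨0, hn⟩⟩
  set m := k / 2 with hmdef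
  set c := (k + 1) / 2 with hcdef
  have hm : m ≤ c := by omega
  have hc : c ≤ k := by omega
  have hmc : m + c = k := by omega
  set ystar : Fin k → ℝ := fun j => if (j : ℕ) < c then 0 else ℓ with hy
  -- Part 1
  have part1 : ∀ i, (m : ℝ) * ℓ ≤ uk ℓ (x i) (t i) ystar := by
    intro i
    obtain ⟨hx0, hx1⟩ := hx i
    calc (m : ℝ) * ℓ
        = ∑ j : Fin k, ((if (j : ℕ) < m then x i else 0)
            + (if c ≤ (j : ℕ) then ℓ - x i else 0)) := (aux_sum_ite k m c (x i) ℓ hm hc hmc).symm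
      _ ≤ uk ℓ (x i) (t i) ystar := by
          apply Finset.sum_le_sum
          intro j _
          rcases lt_or_ge (j : ℕ) c with hjc | hjc
          · have hylit : ystar j = 0 := if_pos hjc
            rcases ht i j with h | h <;> rcases lt_or_ge (j : ℕ) m with hjm | hjm <;>
              simp [uk, h, hylit, not_le_of_gt hjc, hjm, (not_lt_of_ge : m ≤ (j : ℕ) → ¬ (j : ℕ) < m),
                abs_of_nonneg hx0] <;> linarith
          · have hylit : ystar j = ℓ := if_neg (not_lt.2 hjc)
            have hjm : ¬ (j : ℕ) < m := by omega
            rcases ht i j with h | h <;>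
              simp [uk, h, hylit, hjm, hjc, abs_of_nonpos (sub_nonpos.2 hx1)] <;> linarith
  -- upper bound on any placement
  have hub : ∀ y ∈ boxk ℓ k, ∀ i, uk ℓ (x i) (t i) y ≤ (k : ℝ) * ℓ := by
    intro y hy' i
    obtain ⟨hx0, hx1⟩ := hx i
    have : uk ℓ (x i) (t i) y ≤ ∑ _j : Fin k, ℓ := by
      apply Finset.sum_le_sum
      intro j _
      obtain ⟨hy0, hy1⟩ := hy' j
      have habs : |x i - y j| ≤ ℓ := by
        rw [abs_le]; constructor <;> linarith
      rcases ht i j with h | h <;> simp [h, habs]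
    simpa [mul_comm] using this
  have hinf_lb : (m : ℝ) * ℓ ≤ ⨅ i, uk ℓ (x i) (t i) ystar := le_ciInf part1
  refine ⟨part1, ?_⟩
  have hsup_ub : (⨆ y ∈ boxk ℓ k, ⨅ i, uk ℓ (x i) (t i) y) ≤ (k : ℝ) * ℓ := by
    have hkl : (0 : ℝ) ≤ (k : ℝ) * ℓ := by positivity
    apply Real.iSup_le _ hkl
    intro y
    apply Real.iSup_le _ hkl
    intro hy'
    exact ciInf_le_of_le (Finite.bddBelow_range _) ⟨0, hn⟩ (hub y hy' ⟨0, hn⟩)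
  have hk0 : (k : ℝ) ≠ 0 := by positivity
  have hfrac : (0 : ℝ) ≤ (m : ℝ) / (k : ℝ) := by positivity
  calc ((m : ℕ) : ℝ) / (k : ℝ) * (⨆ y ∈ boxk ℓ k, ⨅ i, uk ℓ (x i) (t i) y)
      ≤ (m : ℝ) / (k : ℝ) * ((k : ℝ) * ℓ) := mul_le_mul_of_nonneg_left hsup_ub hfrac
    _ = (m : ℝ) * ℓ := by field_simp
    _ ≤ _ := hinf_lb
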